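/- Let μ be a Borel measure on (0,∞) with ∫_{(0,∞)} min(x, x²) μ(dx) < ∞, γ ≥ 0, ψ₀(θ) = γ²θ² + ∫_{(0,∞)} (e^{−θx} − 1 + θx) μ(dx), and Φ(θ) = ψ₀(θ)/θ for θ > 0, Φ(0) = 0. Let t > 0, λ > 0, let K : [0,t] → ℝ be continuous, and let v : [0,t] → (0,λ] be differentiable with v(t) = λ and v'(s) = e^{K(s)} ψ₀(v(s) e^{−K(s)}) for all s ∈ [0,t]. Then for every s ∈ [0,t], v(s) ≥ λ · exp( −∫_s^t Φ(λ e^{−K(r)}) dr ). -/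

import Mathlib

open Real MeasureTheory

-- nonnegativity of the integrand
lemma stmt12_nonneg {θ x : ℝ} : 0 ≤ Real.exp (-θ * x) - 1 + θ * x := by
  have h := Real.add_one_le_exp (-(θ * x))
  rw [neg_mul]
  linarith

-- pointwise bound
lemma stmt12_bound {θ x : ℝ} (hθ : 0 ≤ θ) (hx : 0 < x) :
    Real.exp (-θ * x) - 1 + θ * x ≤ max θ (θ ^ 2) * min x (x ^ 2) := by
  have hux : 0 ≤ θ * x := mul_nonneg hθ hx.le
  have h1 : Real.exp (-θ * x) - 1 + θ * x ≤ min (θ * x) ((θ * x) ^ 2) := by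
    rcases le_total (θ * x) 1 with h | h
    · refine le_min ?_ ?_
      · have := Real.exp_le_one_iff.mpr (by rw [neg_mul]; linarith : -θ * x ≤ 0)
        linarith
      · have habs : |(-(θ * x))| ≤ 1 := by rw [abs_neg, abs_of_nonneg hux]; exact h
        have := Real.abs_exp_sub_one_sub_id_le habs
        rw [abs_le] at this
        have h2 := this.2
        rw [neg_mul]
        nlinarith [h2]
    · have he : Real.exp (-θ * x) ≤ 1 := Real.exp_le_one_iff.mpr (by rw [neg_mul]; linarith)
      refine le_min (by linarith) ?_
      nlinarith
  refine h1.trans ?_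
  rcases le_total x 1 with h | h
  · have hmin : min x (x ^ 2) = x ^ 2 := min_eq_right (by nlinarith)
    rw [hmin]
    calc min (θ * x) ((θ * x) ^ 2) ≤ (θ * x) ^ 2 := min_le_right _ _
    _ = θ ^ 2 * x ^ 2 := by ring
    _ ≤ max θ (θ ^ 2) * x ^ 2 := by nlinarith [le_max_right θ (θ ^ 2)]
  · have hmin : min x (x ^ 2) = x := min_eq_left (by nlinarith)
    rw [hmin]
    calc min (θ * x) ((θ * x) ^ 2) ≤ θ * x := min_le_left _ _
    _ ≤ max θ (θ ^ 2) * x := by nlinarith [le_max_left θ (θ ^ 2)]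

-- integrability
lemma stmt12_integrable (μ : Measure ℝ)
    (hμ : IntegrableOn (fun x => min x (x ^ 2)) (Set.Ioi 0) μ) {θ : ℝ} (hθ : 0 ≤ θ) :
    IntegrableOn (fun x => Real.exp (-θ * x) - 1 + θ * x) (Set.Ioi 0) μ := by
  have hmaj : IntegrableOn (fun x => max θ (θ ^ 2) * min x (x ^ 2)) (Set.Ioi 0) μ :=
    hμ.const_mul _
  refine hmaj.mono' ?_ ?_
  · exact (Continuous.aestronglyMeasurable (by continuity)).restrict
  · refine (ae_restrict_iff' measurableSet_Ioi).mpr (Filter.Eventually.of_forall fun x hx => ?_)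
    rw [Real.norm_eq_abs, abs_of_nonneg stmt12_nonneg]
    exact stmt12_bound hθ hx

-- convexity pointwise inequality
lemma stmt12_ptwise {a b x : ℝ} (ha : 0 < a) (hab : a ≤ b) (hx : 0 < x) :
    b * (Real.exp (-a * x) - 1 + a * x) ≤ a * (Real.exp (-b * x) - 1 + b * x) := by
  have hb : 0 < b := lt_of_lt_of_le ha hab
  have ht0 : 0 ≤ a / b := (div_pos ha hb).le
  have ht1 : a / b ≤ 1 := (div_le_one hb).mpr hab
  have hconv := convexOn_exp.2 (Set.mem_univ (-(b * x))) (Set.mem_univ 0) ht0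
    (by linarith : 0 ≤ 1 - a / b) (by ring)
  simp only [smul_eq_mul, mul_zero, add_zero, Real.exp_zero, mul_one] at hconv
  have harg : a / b * -(b * x) = -(a * x) := by field_simp
  rw [harg] at hconv
  rw [neg_mul, neg_mul]
  have hbne : b ≠ 0 := hb.ne'
  have h2 : b * Real.exp (-(a * x)) ≤ a * Real.exp (-(b * x)) + (b - a) := by
    have := mul_le_mul_of_nonneg_left hconv hb.le
    field_simp at this ⊢
    linarith [this]
  nlinarith [h2]

-- continuity of ψ₀ at positive points
lemma stmt12_psi_cont (μ : Measure ℝ) (γ : ℝ)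
    (hμ : IntegrableOn (fun x => min x (x ^ 2)) (Set.Ioi 0) μ)
    (ψ₀ : ℝ → ℝ)
    (hψ : ∀ θ, ψ₀ θ = γ ^ 2 * θ ^ 2 +
      ∫ x in Set.Ioi (0:ℝ), (Real.exp (-θ * x) - 1 + θ * x) ∂μ)
    {y : ℝ} (hy : 0 < y) : ContinuousAt ψ₀ y := by
  have hI : ContinuousAt
      (fun θ => ∫ x in Set.Ioi (0:ℝ), (Real.exp (-θ * x) - 1 + θ * x) ∂μ) y := by
    apply MeasureTheory.continuousAt_of_dominated
      (bound := fun x => max (y + 1) ((y + 1) ^ 2) * min x (x ^ 2))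
    · exact Filter.Eventually.of_forall fun θ =>
        (Continuous.aestronglyMeasurable (by continuity)).restrict
    · have hnb : Set.Ioo 0 (y + 1) ∈ nhds y := Ioo_mem_nhds hy (by linarith)
      filter_upwards [hnb] with θ hθ
      refine (ae_restrict_iff' measurableSet_Ioi).mpr (Filter.Eventually.of_forall fun x hx => ?_)
      rw [Real.norm_eq_abs, abs_of_nonneg stmt12_nonneg]
      refine (stmt12_bound hθ.1.le hx).trans ?_
      have hmin : 0 ≤ min x (x ^ 2) := le_min (le_of_lt hx) (by positivity)
      refine mul_le_mul_of_nonneg_right ?_ hmin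
      exact max_le_max hθ.2.le (pow_le_pow_left₀ hθ.1.le hθ.2.le 2)
    · exact hμ.const_mul _
    · refine Filter.Eventually.of_forall fun x => ?_
      exact (Continuous.continuousAt (by continuity :
        Continuous fun θ : ℝ => Real.exp (-θ * x) - 1 + θ * x))
  have hfe : ψ₀ = fun θ => γ ^ 2 * θ ^ 2 +
      ∫ x in Set.Ioi (0:ℝ), (Real.exp (-θ * x) - 1 + θ * x) ∂μ := funext hψ
  rw [hfe]
  exact ((Continuous.continuousAt (by continuity :
    Continuous fun θ : ℝ => γ ^ 2 * θ ^ 2)).add hI)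

theorem stmt_12 (μ : Measure ℝ) (γ : ℝ) (hγ : 0 ≤ γ)
    (hμ : IntegrableOn (fun x => min x (x ^ 2)) (Set.Ioi 0) μ)
    (ψ₀ Φ : ℝ → ℝ)
    (hψ : ∀ θ, ψ₀ θ = γ ^ 2 * θ ^ 2 +
      ∫ x in Set.Ioi (0:ℝ), (Real.exp (-θ * x) - 1 + θ * x) ∂μ)
    (hΦ : ∀ θ > (0:ℝ), Φ θ = ψ₀ θ / θ) (hΦ0 : Φ 0 = 0)
    (t lam : ℝ) (ht : 0 < t) (hlam : 0 < lam)
    (K : ℝ → ℝ) (hK : ContinuousOn K (Set.Icc 0 t))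
    (v : ℝ → ℝ)
    (hvmem : ∀ s ∈ Set.Icc (0:ℝ) t, v s ∈ Set.Ioc 0 lam)
    (hvt : v t = lam)
    (hv : ∀ s ∈ Set.Icc (0:ℝ) t,
      HasDerivWithinAt v (Real.exp (K s) * ψ₀ (v s * Real.exp (-K s)))
        (Set.Icc 0 t) s) :
    ∀ s ∈ Set.Icc (0:ℝ) t,
      lam * Real.exp (-∫ r in s..t, Φ (lam * Real.exp (-K r))) ≤ v s := by
  set φ : ℝ → ℝ := fun r => Φ (lam * Real.exp (-K r)) with hφdef
  have htmem : t ∈ Set.Icc (0:ℝ) t := ⟨ht.le, le_rfl⟩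
  -- continuity of Φ at positive points
  have hΦcont : ∀ y : ℝ, 0 < y → ContinuousAt Φ y := by
    intro y hy
    have h1 : ContinuousAt (fun θ => ψ₀ θ / θ) y :=
      (stmt12_psi_cont μ γ hμ ψ₀ hψ hy).div continuousAt_id hy.ne'
    refine h1.congr ?_
    filter_upwards [isOpen_Ioi.mem_nhds (Set.mem_Ioi.mpr hy)] with θ hθ
    exact (hΦ θ hθ).symm
  -- φ continuous on Icc
  have hφc : ContinuousOn φ (Set.Icc 0 t) := by
    intro r hr
    have hinner : ContinuousWithinAt (fun r => lam * Real.exp (-K r)) (Set.Icc 0 t) r :=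
      continuousWithinAt_const.mul (Real.continuous_exp.continuousAt.comp_continuousWithinAt (hK r hr).neg)
    exact (hΦcont _ (by positivity)).comp_continuousWithinAt hinner
  -- F and its derivative
  set F : ℝ → ℝ := fun s => ∫ r in t..s, φ r with hFdef
  have hFderiv : ∀ s ∈ Set.Icc (0:ℝ) t, HasDerivWithinAt F (φ s) (Set.Icc 0 t) s := by
    intro s hs
    haveI : Fact (s ∈ Set.Icc (0:ℝ) t) := ⟨hs⟩
    have hInt : IntervalIntegrable φ volume t s :=
      (hφc.mono (Set.uIcc_subset_Icc htmem hs)).intervalIntegrable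
    exact intervalIntegral.integral_hasDerivWithinAt_right hInt
      (hφc.stronglyMeasurableAtFilter_nhdsWithin measurableSet_Icc s) (hφc s hs)
  -- key pointwise inequality: v' ≤ v * φ
  have hkey : ∀ s ∈ Set.Icc (0:ℝ) t,
      Real.exp (K s) * ψ₀ (v s * Real.exp (-K s)) ≤ v s * φ s := by
    intro s hs
    obtain ⟨hv0, hvl⟩ := hvmem s hs
    set E := Real.exp (-K s) with hE
    have hEpos : 0 < E := Real.exp_pos _
    set a := v s * E with hadef
    set b := lam * E with hbdef
    have ha : 0 < a := mul_pos hv0 hEpos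
    have hab : a ≤ b := mul_le_mul_of_nonneg_right hvl hEpos.le
    have hb : 0 < b := lt_of_lt_of_le ha hab
    have hmain : b * ψ₀ a ≤ a * ψ₀ b := by
      rw [hψ a, hψ b]
      have hintineq : b * (∫ x in Set.Ioi (0:ℝ), (Real.exp (-a * x) - 1 + a * x) ∂μ)
          ≤ a * (∫ x in Set.Ioi (0:ℝ), (Real.exp (-b * x) - 1 + b * x) ∂μ) := by
        rw [← integral_const_mul, ← integral_const_mul]
        refine setIntegral_mono_on ((stmt12_integrable μ hμ ha.le).const_mul b)
          ((stmt12_integrable μ hμ hb.le).const_mul a) measurableSet_Ioi ?_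
        intro x hx
        exact stmt12_ptwise ha hab hx
      nlinarith [hintineq, mul_nonneg (mul_nonneg (sq_nonneg γ) (mul_pos ha hb).le) (sub_nonneg.mpr hab)]
    have hφs : φ s = ψ₀ b / b := hΦ b hb
    have heK : Real.exp (K s) = E⁻¹ := by rw [hE, ← Real.exp_neg, neg_neg]
    have hvs : v s = a * E⁻¹ := by rw [hadef, mul_inv_cancel_right₀ hEpos.ne']
    rw [hφs, heK, hvs]
    have h1 : ψ₀ a ≤ a * ψ₀ b / b := (le_div_iff₀ hb).mpr (by rw [mul_comm]; exact hmain)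
    calc E⁻¹ * ψ₀ a ≤ E⁻¹ * (a * ψ₀ b / b) :=
          mul_le_mul_of_nonneg_left h1 (inv_nonneg.mpr hEpos.le)
    _ = a * E⁻¹ * (ψ₀ b / b) := by ring
  -- w := v * exp(-F) is antitone
  set w : ℝ → ℝ := fun s => v s * Real.exp (-F s) with hwdef
  have hwderiv : ∀ s ∈ Set.Icc (0:ℝ) t,
      HasDerivWithinAt w
        (Real.exp (K s) * ψ₀ (v s * Real.exp (-K s)) * Real.exp (-F s)
          + v s * (Real.exp (-F s) * -φ s)) (Set.Icc 0 t) s := by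
    intro s hs
    exact (hv s hs).mul ((hFderiv s hs).neg.exp)
  have hwanti : AntitoneOn w (Set.Icc 0 t) := by
    apply antitoneOn_of_deriv_nonpos (convex_Icc 0 t)
    · exact fun s hs => (hwderiv s hs).continuousWithinAt
    · intro x hx
      rw [interior_Icc] at hx
      exact ((hwderiv x (Set.Ioo_subset_Icc_self hx)).hasDerivAt
        (Icc_mem_nhds hx.1 hx.2)).differentiableAt.differentiableWithinAt
    · intro x hx
      rw [interior_Icc] at hx
      have hxI := Set.Ioo_subset_Icc_self hx
      rw [((hwderiv x hxI).hasDerivAt (Icc_mem_nhds hx.1 hx.2)).deriv]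
      have hk := hkey x hxI
      have hEp : 0 < Real.exp (-F x) := Real.exp_pos _
      have hv0 := (hvmem x hxI).1
      nlinarith [hk, hEp, hv0]
  -- conclude
  intro s hs
  have hws := hwanti hs htmem hs.2
  have hFt : F t = 0 := intervalIntegral.integral_same
  have hwt : w t = lam := by rw [hwdef]; simp [hFt, hvt]
  rw [hwt] at hws
  -- hws : lam ≤ v s * exp (-F s)
  have hsym : -∫ r in s..t, φ r = F s := by
    rw [hFdef]
    simp [intervalIntegral.integral_symm t s]
  show lam * Real.exp (-∫ r in s..t, φ r) ≤ v s
  rw [hsym]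
  have hEp : 0 < Real.exp (F s) := Real.exp_pos _
  have h2 := mul_le_mul_of_nonneg_right hws hEp.le
  rw [mul_assoc, ← Real.exp_add] at h2
  simpa using h2
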